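/- Let T be a tree, τ a threshold function on T, S₀ a target set of T, and suppose S₀ activates a vertex v at time t (i.e., v ∈ I_τ^t(S₀) \ I_τ^{t−1}(S₀)). Then there exists a path P = (v₀, v₁, …, v_t = v) in T such that v_i ∈ I_τ^i(S₀) \ I_τ^{i−1}(S₀) for each i ≥ 1 and v₀ ∈ S₀, and every internal vertex v_i (0 < i < t) of P satisfies τ(v_i) < deg(v_i). -/
import Mathlib


namespace TSS

variable {V : Type*}

/-- The interval (one activation step): `S` together with all vertices having
at least `τ v` neighbors in `S`. -/
def interval (G : SimpleGraph V) (τ : V → ℕ) (S : Set V) : Set V :=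
  S ∪ {v | τ v ≤ (G.neighborSet v ∩ S).ncard}

/-- `S` is a target set if iterating the interval operator reaches all of `V`. -/
def IsTargetSet (G : SimpleGraph V) (τ : V → ℕ) (S : Set V) : Prop :=
  ∃ t : ℕ, (interval G τ)^[t] S = Set.univ

/-- The activation time of a set: least `t` with `I^[t+1] S = I^[t] S`. -/
noncomputable def actTime (G : SimpleGraph V) (τ : V → ℕ) (S : Set V) : ℕ :=
  sInf {t : ℕ | (interval G τ)^[t + 1] S = (interval G τ)^[t] S}

/-- The maximum activation time over all target sets. -/
noncomputable def maxTime (G : SimpleGraph V) (τ : V → ℕ) : ℕ :=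
  sSup {t : ℕ | ∃ S : Set V, IsTargetSet G τ S ∧ actTime G τ S = t}

/-- The activation time of a vertex `v` for an initial set `S`. -/
noncomputable def vTime (G : SimpleGraph V) (τ : V → ℕ) (S : Set V) (v : V) : ℕ :=
  sInf {k : ℕ | v ∈ (interval G τ)^[k] S}

/-- The set of vertices eventually activated from `S`. -/
def hull (G : SimpleGraph V) (τ : V → ℕ) (S : Set V) : Set V :=
  {v | ∃ k : ℕ, v ∈ (interval G τ)^[k] S}

end TSS

open TSS

section Aux

variable {V : Type*} (G : SimpleGraph V) (τ : V → ℕ)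

lemma subset_interval' (S : Set V) : S ⊆ interval G τ S := Set.subset_union_left

lemma iter_mono' (S : Set V) {a b : ℕ} (h : a ≤ b) :
    (interval G τ)^[a] S ⊆ (interval G τ)^[b] S := by
  induction b with
  | zero => simp_all
  | succ n ih =>
    rcases Nat.lt_or_ge a (n + 1) with h' | h'
    · refine (ih (Nat.lt_succ_iff.mp h')).trans ?_
      rw [Function.iterate_succ_apply']
      exact subset_interval' G τ _
    · have : a = n + 1 := le_antisymm h h'
      subst this; rfl

lemma key1' {S : Set V} {v : V} (hτ : 1 ≤ τ v)
    (h1 : v ∈ interval G τ S) (h2 : v ∉ S) : ∃ u, G.Adj v u ∧ u ∈ S := by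
  have hle : τ v ≤ (G.neighborSet v ∩ S).ncard := h1.resolve_left h2
  have : (G.neighborSet v ∩ S).Nonempty := by
    apply Set.nonempty_of_ncard_ne_zero
    omega
  obtain ⟨u, hu1, hu2⟩ := this
  exact ⟨u, hu1, hu2⟩

lemma key2' [Fintype V] {A B : Set V} {v : V}
    (h1 : v ∈ interval G τ B) (h2 : v ∉ B) (h3 : v ∉ interval G τ A) :
    ∃ u, G.Adj v u ∧ u ∈ B ∧ u ∉ A := by
  have hle : τ v ≤ (G.neighborSet v ∩ B).ncard := h1.resolve_left h2
  have hlt : (G.neighborSet v ∩ A).ncard < τ v := by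
    by_contra h
    push_neg at h
    exact h3 (Or.inr h)
  by_contra hc
  push_neg at hc
  have hsub : G.neighborSet v ∩ B ⊆ G.neighborSet v ∩ A := by
    rintro u ⟨hu1, hu2⟩
    exact ⟨hu1, hc u hu1 hu2⟩
  have := Set.ncard_le_ncard hsub (Set.toFinite _)
  omega

lemma path_exists' [Fintype V] (hτ : ∀ x : V, 1 ≤ τ x) (S₀ : Set V) :
    ∀ t : ℕ, 1 ≤ t → ∀ v : V,
    v ∈ (interval G τ)^[t] S₀ \ (interval G τ)^[t - 1] S₀ →
    ∃ vs : ℕ → V, vs t = v ∧ vs 0 ∈ S₀ ∧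
      (∀ i < t, G.Adj (vs i) (vs (i + 1))) ∧
      (∀ i : ℕ, 1 ≤ i → i ≤ t →
        vs i ∈ (interval G τ)^[i] S₀ \ (interval G τ)^[i - 1] S₀) := by
  intro t ht
  induction t, ht using Nat.le_induction with
  | base =>
    intro v hv
    simp only [Function.iterate_one, Nat.sub_self, Function.iterate_zero, id] at hv
    obtain ⟨u, hadj, huS⟩ := key1' G τ (hτ v) hv.1 hv.2
    refine ⟨fun i => if i = 0 then u else v, by simp, by simp [huS], ?_, ?_⟩
    · intro i hi
      interval_cases i
      simpa using hadj.symm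
    · intro i hi1 hi2
      have : i = 1 := by omega
      subst this
      simpa using hv
  | succ n hn ih =>
    intro v hv
    simp only [Nat.add_sub_cancel] at hv
    have h1 : v ∈ interval G τ ((interval G τ)^[n] S₀) := by
      have := hv.1
      rwa [Function.iterate_succ_apply'] at this
    have h3 : v ∉ interval G τ ((interval G τ)^[n - 1] S₀) := by
      have h3' := hv.2
      rw [show n = (n - 1) + 1 from by omega, Function.iterate_succ_apply'] at h3'
      exact h3'
    obtain ⟨u, hadj, huB, huA⟩ := key2' G τ h1 hv.2 h3
    obtain ⟨vs', h't, h'0, h'adj, h'times⟩ := ih u ⟨huB, huA⟩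
    refine ⟨fun i => if i ≤ n then vs' i else v, by simp, by simp [hn, h'0], ?_, ?_⟩
    · intro i hi
      rcases Nat.lt_or_ge i n with h' | h'
      · have e1 : i ≤ n := by omega
        have e2 : i + 1 ≤ n := by omega
        simpa [e1, e2] using h'adj i h'
      · have : i = n := by omega
        subst this
        simpa [h't] using hadj.symm
    · intro i hi1 hi2
      rcases Nat.lt_or_ge i (n + 1) with h' | h'
      · have hle : i ≤ n := by omega
        simpa [hle] using h'times i hi1 hle
      · have : i = n + 1 := by omega
        subst this
        simp only [Nat.add_sub_cancel]
        have : ¬ (n + 1 ≤ n) := by omega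
        simpa [this] using hv

end Aux

/-- if a target set S₀ of a tree activates v at time t, there is a
path v₀,…,v_t = v with v₀ ∈ S₀, vᵢ activated at time exactly i, and all internal
vertices non-saturated. -/
theorem stmt8 {V : Type*} [Fintype V] (G : SimpleGraph V) (hT : G.IsTree)
    (τ : V → ℕ) (hτ : ∀ x : V, 1 ≤ τ x ∧ τ x ≤ (G.neighborSet x).ncard)
    (S₀ : Set V) (hS : TSS.IsTargetSet G τ S₀)
    (v : V) (t : ℕ) (htpos : 1 ≤ t)
    (hv : v ∈ (TSS.interval G τ)^[t] S₀ \ (TSS.interval G τ)^[t - 1] S₀) :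
    ∃ vs : ℕ → V, vs t = v ∧ vs 0 ∈ S₀ ∧
      (∀ i ≤ t, ∀ j ≤ t, vs i = vs j → i = j) ∧
      (∀ i < t, G.Adj (vs i) (vs (i + 1))) ∧
      (∀ i : ℕ, 1 ≤ i → i ≤ t →
        vs i ∈ (TSS.interval G τ)^[i] S₀ \ (TSS.interval G τ)^[i - 1] S₀) ∧
      (∀ i : ℕ, 0 < i → i < t → τ (vs i) < (G.neighborSet (vs i)).ncard) := by
  obtain ⟨vs, hvt, hv0, hadj, htimes⟩ :=
    path_exists' G τ (fun x => (hτ x).1) S₀ t htpos v hv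
  have hmemI : ∀ i ≤ t, vs i ∈ (interval G τ)^[i] S₀ := by
    intro i hi
    rcases Nat.eq_zero_or_pos i with rfl | hpos
    · simpa using hv0
    · exact (htimes i hpos hi).1
  have hnotmem : ∀ i, 1 ≤ i → i ≤ t → vs i ∉ (interval G τ)^[i - 1] S₀ :=
    fun i h1 h2 => (htimes i h1 h2).2
  refine ⟨vs, hvt, hv0, ?_, hadj, htimes, ?_⟩
  · -- injectivity
    have key : ∀ i j, i < j → j ≤ t → vs i ≠ vs j := by
      intro i j hij hjt heq
      have h1 : vs i ∈ (interval G τ)^[j - 1] S₀ :=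
        iter_mono' G τ S₀ (by omega) (hmemI i (by omega))
      have h2 := hnotmem j (by omega) hjt
      rw [heq] at h1
      exact h2 h1
    intro i hi j hj heq
    rcases lt_trichotomy i j with h | h | h
    · exact absurd heq (key i j h hj)
    · exact h
    · exact absurd heq.symm (key j i h hi)
  · -- non-saturation of internal vertices
    intro i hi0 hit
    have hmem := htimes i hi0 (le_of_lt hit)
    have hτle : τ (vs i) ≤ (G.neighborSet (vs i) ∩ (interval G τ)^[i - 1] S₀).ncard := by
      have hmi : vs i ∈ interval G τ ((interval G τ)^[i - 1] S₀) := by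
        have h' : vs i ∈ (interval G τ)^[(i - 1) + 1] S₀ := by
          rw [show i - 1 + 1 = i from by omega]; exact hmem.1
        rwa [Function.iterate_succ_apply'] at h'
      exact hmi.resolve_left hmem.2
    have hnext : vs (i + 1) ∈ G.neighborSet (vs i) := hadj i hit
    have hnextnot : vs (i + 1) ∉ (interval G τ)^[i - 1] S₀ := by
      intro hc
      have h2 := hnotmem (i + 1) (by omega) (by omega)
      simp only [Nat.add_sub_cancel] at h2
      exact h2 (iter_mono' G τ S₀ (by omega) hc)
    have hss : G.neighborSet (vs i) ∩ (interval G τ)^[i - 1] S₀ ⊂ G.neighborSet (vs i) := by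
      refine ⟨Set.inter_subset_left, fun hc => ?_⟩
      exact hnextnot (hc hnext).2
    have := Set.ncard_lt_ncard hss (Set.toFinite _)
    omega
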